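/- Let H be a Hermitian matrix with spectral gap c > 0 between its ground energy and first excited energy, and let ρ be the uniform mixture over the ground space (the β=∞ Gibbs state). Then for any observable O with ‖O‖ ≤ 1, the Gaussian-weighted operator Fourier transform Ô(τ) = Σ_ν e^{−ν²/(4τ²)} O_ν satisfies ‖[Ô(τ), ρ]‖₁ ≤ 2 e^{−c²/(4τ²)}. -/

import Mathlib

open Matrix
open scoped Matrix.Norms.L2Operator ComplexOrder

/-- The trace (Schatten 1) norm of a complex square matrix. -/
noncomputable def traceNorm {n : Type*} [Fintype n] [DecidableEq n] (A : Matrix n n ℂ) : ℝ :=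
  (((Matrix.posSemidef_conjTranspose_mul_self A).1.eigenvectorUnitary : Matrix n n ℂ) *
    diagonal (((↑) : ℝ → ℂ) ∘ (√·) ∘ (Matrix.posSemidef_conjTranspose_mul_self A).1.eigenvalues) *
    (star (Matrix.posSemidef_conjTranspose_mul_self A).1.eigenvectorUnitary : Matrix n n ℂ)).trace.re

namespace Matrix.PosSemidef

variable {n : Type*} [Fintype n] [DecidableEq n]

/-- The square root of a positive semidefinite matrix, via its eigendecomposition. -/
noncomputable def sqrt {A : Matrix n n ℂ} (hA : A.PosSemidef) : Matrix n n ℂ :=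
  (hA.1.eigenvectorUnitary : Matrix n n ℂ) * diagonal (((↑) : ℝ → ℂ) ∘ (√·) ∘ hA.1.eigenvalues) *
    (star hA.1.eigenvectorUnitary : Matrix n n ℂ)

open scoped MatrixOrder in
lemma sqrt_eq_cfc {A : Matrix n n ℂ} (hA : A.PosSemidef) : hA.sqrt = CFC.sqrt A := by
  rw [CFC.sqrt_eq_cfc, cfc_nnreal_eq_real _ A hA.nonneg, hA.1.cfc_eq, IsHermitian.cfc,
    Unitary.conjStarAlgAut_apply, sqrt]
  have hmax : ∀ i, max (hA.1.eigenvalues i) 0 = hA.1.eigenvalues i :=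
    fun i => max_eq_left (hA.eigenvalues_nonneg i)
  congr 2
  funext i
  simp [Function.comp_def, hmax]

open scoped MatrixOrder in
lemma posSemidef_sqrt {A : Matrix n n ℂ} (hA : A.PosSemidef) : hA.sqrt.PosSemidef := by
  rw [sqrt_eq_cfc]
  exact (CFC.sqrt_nonneg A).posSemidef

open scoped MatrixOrder in
lemma sqrt_mul_self {A : Matrix n n ℂ} (hA : A.PosSemidef) : hA.sqrt * hA.sqrt = A := by
  rw [sqrt_eq_cfc]
  exact CFC.sqrt_mul_sqrt_self A hA.nonneg

open scoped MatrixOrder in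
lemma eq_sqrt_of_sq_eq {A B : Matrix n n ℂ} (hA : A.PosSemidef) (hB : B.PosSemidef)
    (h : A ^ 2 = B) : A = hB.sqrt := by
  rw [sqrt_eq_cfc, eq_comm, CFC.sqrt_eq_iff B A hB.nonneg hA.nonneg, ← sq]
  exact h

end Matrix.PosSemidef

lemma traceNorm_eq {n : Type*} [Fintype n] [DecidableEq n] (A : Matrix n n ℂ) :
    traceNorm A = ((Matrix.posSemidef_conjTranspose_mul_self A).sqrt.trace).re := rfl

namespace WOFTAux

variable {n : Type*} [Fintype n] [DecidableEq n]

noncomputable def env (x : n → ℂ) : ℝ := ‖(WithLp.equiv 2 (n → ℂ)).symm x‖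

lemma env_nonneg (x : n → ℂ) : 0 ≤ env x := norm_nonneg _

omit [DecidableEq n] in
lemma env_sq (x : n → ℂ) : env x ^ 2 = (star x ⬝ᵥ x).re := by
  rw [env, ← inner_self_eq_norm_sq (𝕜 := ℂ), EuclideanSpace.inner_eq_star_dotProduct, dotProduct_comm]
  rfl

lemma env_mulVec_sq (A : Matrix n n ℂ) (x : n → ℂ) :
    env (A *ᵥ x) ^ 2 = (star x ⬝ᵥ ((Aᴴ * A) *ᵥ x)).re := by
  rw [env_sq]
  congr 1
  simp only [star_mulVec, dotProduct_mulVec, vecMul_vecMul]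

lemma opNorm_le (A : Matrix n n ℂ) {a : ℝ} (ha : 0 ≤ a)
    (h : ∀ x : n → ℂ, env (A *ᵥ x) ≤ a * env x) : ‖A‖ ≤ a := by
  rw [l2_opNorm_def]
  refine ContinuousLinearMap.opNorm_le_bound _ ha fun v => ?_
  have := h (WithLp.equiv 2 (n → ℂ) v)
  simpa [env, Matrix.toEuclideanLin_apply] using this

lemma mulVec_env_le (A : Matrix n n ℂ) (x : n → ℂ) : env (A *ᵥ x) ≤ ‖A‖ * env x := by
  have := A.l2_opNorm_mulVec ((WithLp.equiv 2 (n → ℂ)).symm x)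
  simpa [env] using this

lemma trace_nonneg' {M : Matrix n n ℂ} (hM : M.PosSemidef) : (0:ℂ) ≤ M.trace := by
  rw [Matrix.trace]
  refine Finset.sum_nonneg fun i _ => ?_
  have := hM.diag_nonneg (i := i)
  simpa [Matrix.diag, dotProduct, Pi.single_apply, Matrix.mulVec,
    Finset.sum_ite_eq, Finset.sum_ite_eq'] using this

lemma trace_eq_re {M : Matrix n n ℂ} (hM : M.PosSemidef) : M.trace = (M.trace.re : ℂ) := by
  have h := trace_nonneg' hM
  rw [Complex.le_def] at h
  exact Complex.ext rfl (by simpa using h.2.symm)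

lemma sqrt_congr {A B : Matrix n n ℂ} (h : A = B) (hA : A.PosSemidef) (hB : B.PosSemidef) :
    hA.sqrt = hB.sqrt := by subst h; rfl

lemma trace_sqrt_eq (A : Matrix n n ℂ) (hA : A.PosSemidef) :
    hA.sqrt.trace = ∑ i, (Real.sqrt (hA.1.eigenvalues i) : ℂ) := by
  rw [Matrix.PosSemidef.sqrt, Matrix.trace_mul_cycle,
    Unitary.coe_star_mul_self, Matrix.one_mul, Matrix.trace_diagonal]
  rfl

lemma sqrt_add_orth {A B : Matrix n n ℂ} (hA : A.PosSemidef) (hB : B.PosSemidef)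
    (hAB : A * B = 0) (hS : (A + B).PosSemidef) : hS.sqrt = hA.sqrt + hB.sqrt := by
  have hsA := hA.posSemidef_sqrt
  have hsB := hB.posSemidef_sqrt
  have h1 : A * hB.sqrt = 0 := by
    rw [← Matrix.self_mul_conjTranspose_eq_zero]
    calc (A * hB.sqrt) * (A * hB.sqrt)ᴴ
        = A * (hB.sqrt * hB.sqrtᴴ) * Aᴴ := by noncomm_ring [Matrix.conjTranspose_mul]
      _ = 0 := by rw [hsB.1, hB.sqrt_mul_self, hAB, Matrix.zero_mul]
  have h2 : hB.sqrt * A = 0 := by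
    have := congrArg Matrix.conjTranspose h1
    rwa [Matrix.conjTranspose_mul, Matrix.conjTranspose_zero, hsB.1, hA.1] at this
  have h3 : hB.sqrt * hA.sqrt = 0 := by
    rw [← Matrix.self_mul_conjTranspose_eq_zero]
    calc (hB.sqrt * hA.sqrt) * (hB.sqrt * hA.sqrt)ᴴ
        = hB.sqrt * (hA.sqrt * hA.sqrtᴴ) * hB.sqrtᴴ := by noncomm_ring [Matrix.conjTranspose_mul]
      _ = 0 := by rw [hsA.1, hA.sqrt_mul_self, hsB.1, h2, Matrix.zero_mul]
  have h4 : hA.sqrt * hB.sqrt = 0 := by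
    have := congrArg Matrix.conjTranspose h3
    rwa [Matrix.conjTranspose_mul, Matrix.conjTranspose_zero, hsA.1, hsB.1] at this
  refine ((hsA.add hsB).eq_sqrt_of_sq_eq hS ?_).symm
  rw [pow_two, Matrix.add_mul, Matrix.mul_add, Matrix.mul_add, h3, h4,
    hA.sqrt_mul_self, hB.sqrt_mul_self]
  abel

omit [Fintype n] in
lemma diag_herm (f : n → ℝ) : (diagonal ((↑) ∘ f) : Matrix n n ℂ)ᴴ = diagonal ((↑) ∘ f) :=
  isHermitian_diagonal_of_self_adjoint _ (by
    funext i
    simp [Pi.star_apply, Complex.star_def, Complex.conj_ofReal])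

lemma diag_mul_diag (f g : n → ℝ) :
    (diagonal ((↑) ∘ f) : Matrix n n ℂ) * diagonal ((↑) ∘ g)
      = diagonal ((↑) ∘ fun i => f i * g i) := by
  rw [Matrix.diagonal_mul_diagonal]
  exact congrArg Matrix.diagonal (funext fun i => (Complex.ofReal_mul _ _).symm)

omit [Fintype n] in
lemma Dcongr {f g : n → ℝ} (h : ∀ i, f i = g i) :
    (diagonal ((↑) ∘ f) : Matrix n n ℂ) = diagonal ((↑) ∘ g) :=
  congrArg Matrix.diagonal (funext fun i => congrArg _ (h i))

lemma traceNorm_conjTranspose (A : Matrix n n ℂ) : traceNorm Aᴴ = traceNorm A := by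
  classical
  have hM : (Aᴴ * A).PosSemidef := Matrix.posSemidef_conjTranspose_mul_self A
  set lam : n → ℝ := hM.1.eigenvalues with hlam
  have hlam_nn : ∀ i, 0 ≤ lam i := hM.eigenvalues_nonneg
  set U : Matrix n n ℂ := hM.1.eigenvectorUnitary.1 with hU
  have hUsU : star U * U = 1 := Unitary.coe_star_mul_self hM.1.eigenvectorUnitary
  have hUUs : U * star U = 1 := Unitary.coe_mul_star_self hM.1.eigenvectorUnitary
  have hspec : Aᴴ * A = U * diagonal ((↑) ∘ lam) * star U := hM.1.spectral_theorem
  set g : n → ℝ := fun i => if lam i = 0 then 0 else (Real.sqrt (lam i))⁻¹ with hg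
  set ind : n → ℝ := fun i => if lam i = 0 then 0 else 1 with hind
  set W : Matrix n n ℂ := A * U * diagonal ((↑) ∘ g) with hW
  have hWc : Wᴴ = diagonal ((↑) ∘ g) * (star U * Aᴴ) := by
    rw [hW, Matrix.conjTranspose_mul, Matrix.conjTranspose_mul, diag_herm,
      Matrix.star_eq_conjTranspose]
  have sandwich : ∀ f : n → ℝ, (A * U * diagonal ((↑) ∘ f))ᴴ * (A * U * diagonal ((↑) ∘ f))
      = diagonal ((↑) ∘ fun i => f i * lam i * f i) := by
    intro f
    have e1 : (A * U * diagonal ((↑) ∘ f))ᴴ * (A * U * diagonal ((↑) ∘ f))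
        = diagonal ((↑) ∘ f) * ((star U * (Aᴴ * A)) * (U * diagonal ((↑) ∘ f))) := by
      rw [Matrix.conjTranspose_mul, Matrix.conjTranspose_mul, diag_herm]
      simp only [Matrix.mul_assoc, Matrix.star_eq_conjTranspose]
    rw [e1, hspec]
    calc diagonal ((↑) ∘ f) * ((star U * (U * diagonal ((↑) ∘ lam) * star U)) * (U * diagonal ((↑) ∘ f)))
        = diagonal ((↑) ∘ f) * ((star U * U) * (diagonal ((↑) ∘ lam) * ((star U * U) * diagonal ((↑) ∘ f)))) := by
          simp only [Matrix.mul_assoc]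
      _ = diagonal ((↑) ∘ f) * (diagonal ((↑) ∘ lam) * diagonal ((↑) ∘ f)) := by
          rw [hUsU, Matrix.one_mul, Matrix.one_mul]
      _ = diagonal ((↑) ∘ fun i => f i * (lam i * f i)) := by
          rw [diag_mul_diag, diag_mul_diag]
      _ = diagonal ((↑) ∘ fun i => f i * lam i * f i) := Dcongr fun i => (mul_assoc _ _ _).symm
  have hWW : Wᴴ * W = diagonal ((↑) ∘ ind) := by
    rw [hW, sandwich g]
    refine Dcongr fun i => ?_
    by_cases h : lam i = 0
    · simp [hg, hind, h]
    · have hs : Real.sqrt (lam i) ≠ 0 :=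
        Real.sqrt_ne_zero'.mpr (lt_of_le_of_ne (hlam_nn i) (Ne.symm h))
      simp only [hg, hind, if_neg h]
      rw [← Real.mul_self_sqrt (hlam_nn i)]
      field_simp
      rw [Real.sqrt_sq (Real.sqrt_nonneg _)]
  have hZ : A * U * diagonal ((↑) ∘ fun i => 1 - ind i) = 0 := by
    rw [← Matrix.conjTranspose_mul_self_eq_zero, sandwich]
    rw [show ((fun i => (1 - ind i) * lam i * (1 - ind i)) : n → ℝ) = fun _ => 0 from
      funext fun i => by by_cases h : lam i = 0 <;> simp [hind, h]]
    rw [show ((↑) ∘ (fun _ => (0:ℝ)) : n → ℂ) = fun _ => 0 from funext fun i => Complex.ofReal_zero]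
    exact Matrix.diagonal_zero
  have hsum1 : (diagonal ((↑) ∘ ind) : Matrix n n ℂ)
      + diagonal ((↑) ∘ fun i => 1 - ind i) = 1 := by
    rw [Matrix.diagonal_add]
    rw [show (fun i => (((↑) ∘ ind : n → ℂ)) i + (((↑) ∘ fun i => 1 - ind i : n → ℂ)) i)
        = fun _ => (1:ℂ) from funext fun i => by push_cast [Function.comp_apply]; ring]
    exact Matrix.diagonal_one
  have hAU : A * U * diagonal ((↑) ∘ ind) = A * U :=
    calc A * U * diagonal ((↑) ∘ ind)
        = A * U * diagonal ((↑) ∘ ind) + A * U * diagonal ((↑) ∘ fun i => 1 - ind i) := by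
          rw [hZ, add_zero]
      _ = A * U * ((diagonal ((↑) ∘ ind) : Matrix n n ℂ)
            + diagonal ((↑) ∘ fun i => 1 - ind i)) := by rw [Matrix.mul_add]
      _ = A * U := by rw [hsum1, Matrix.mul_one]
  set S : Matrix n n ℂ := W * diagonal ((↑) ∘ fun i => Real.sqrt (lam i)) * Wᴴ with hS
  have hSpsd : S.PosSemidef := by
    refine Matrix.PosSemidef.mul_mul_conjTranspose_same ?_ W
    refine Matrix.posSemidef_diagonal_iff.mpr fun i => ?_
    simp only [Function.comp_apply]
    exact Complex.zero_le_real.mpr (Real.sqrt_nonneg _)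
  have hSsq : S ^ 2 = A * Aᴴ := by
    have e3 : S ^ 2 = W * ((diagonal ((↑) ∘ fun i => Real.sqrt (lam i)) * (Wᴴ * W))
        * diagonal ((↑) ∘ fun i => Real.sqrt (lam i))) * Wᴴ := by
      rw [pow_two, hS]; simp only [Matrix.mul_assoc]
    rw [e3, hWW, diag_mul_diag, diag_mul_diag]
    have e4 : (diagonal ((↑) ∘ fun i => Real.sqrt (lam i) * ind i * Real.sqrt (lam i)) : Matrix n n ℂ)
        = diagonal ((↑) ∘ fun i => ind i * lam i) := by
      refine Dcongr fun i => ?_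
      by_cases h : lam i = 0 <;>
        simp [hind, h, Real.mul_self_sqrt (hlam_nn i)]
    rw [e4]
    calc W * diagonal ((↑) ∘ fun i => ind i * lam i) * Wᴴ
        = A * U * (diagonal ((↑) ∘ g) * diagonal ((↑) ∘ fun i => ind i * lam i)
            * diagonal ((↑) ∘ g)) * (star U * Aᴴ) := by
          rw [hW, hWc]; simp only [Matrix.mul_assoc]
      _ = A * U * diagonal ((↑) ∘ fun i => g i * (ind i * lam i) * g i) * (star U * Aᴴ) := by
          rw [diag_mul_diag, diag_mul_diag]
      _ = A * U * diagonal ((↑) ∘ ind) * (star U * Aᴴ) := by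
          rw [show (diagonal ((↑) ∘ fun i => g i * (ind i * lam i) * g i) : Matrix n n ℂ)
              = diagonal ((↑) ∘ ind) from Dcongr fun i => ?_]
          by_cases h : lam i = 0
          · simp [hg, hind, h]
          · have hs : Real.sqrt (lam i) ≠ 0 :=
              Real.sqrt_ne_zero'.mpr (lt_of_le_of_ne (hlam_nn i) (Ne.symm h))
            simp only [hg, hind, if_neg h, one_mul]
            rw [← Real.mul_self_sqrt (hlam_nn i)]
            field_simp
            rw [Real.sqrt_sq (Real.sqrt_nonneg _)]
      _ = A * (U * star U) * Aᴴ := by rw [hAU]; simp only [Matrix.mul_assoc]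
      _ = A * Aᴴ := by rw [hUUs, Matrix.mul_one]
  have hN : ((Aᴴ)ᴴ * Aᴴ).PosSemidef := Matrix.posSemidef_conjTranspose_mul_self Aᴴ
  have hS_eq : S = hN.sqrt := by
    refine hSpsd.eq_sqrt_of_sq_eq hN ?_
    rw [hSsq, Matrix.conjTranspose_conjTranspose]
  have htr : S.trace = ∑ i, (Real.sqrt (lam i) : ℂ) := by
    rw [hS, Matrix.trace_mul_cycle, hWW, diag_mul_diag, Matrix.trace_diagonal]
    refine Finset.sum_congr rfl fun i _ => ?_
    simp only [Function.comp_apply]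
    by_cases h : lam i = 0 <;> simp [hind, h]
  rw [traceNorm_eq, traceNorm_eq, ← hS_eq, htr, trace_sqrt_eq _ hM]

lemma traceNorm_sub_orth {B C : Matrix n n ℂ} (h1 : Bᴴ * C = 0) (h2 : Cᴴ * B = 0)
    (h3 : (Bᴴ * B) * (Cᴴ * C) = 0) :
    traceNorm (B - C) = traceNorm B + traceNorm C := by
  have hB := Matrix.posSemidef_conjTranspose_mul_self B
  have hC := Matrix.posSemidef_conjTranspose_mul_self C
  have hsum : (B - C)ᴴ * (B - C) = Bᴴ * B + Cᴴ * C := by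
    rw [Matrix.conjTranspose_sub, Matrix.sub_mul, Matrix.mul_sub, Matrix.mul_sub, h1, h2]
    abel
  rw [traceNorm_eq, traceNorm_eq, traceNorm_eq, sqrt_congr hsum _ (hB.add hC), sqrt_add_orth hB hC h3 (hB.add hC),
    Matrix.trace_add, Complex.add_re]

/-- `‖sqrt (BᴴB)‖ = ‖B‖`. -/
lemma norm_sqrt_ctms (B : Matrix n n ℂ) :
    ‖(Matrix.posSemidef_conjTranspose_mul_self B).sqrt‖ = ‖B‖ := by
  have hM := Matrix.posSemidef_conjTranspose_mul_self B
  have hK := hM.posSemidef_sqrt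
  have h1 : ‖hM.sqrt‖ * ‖hM.sqrt‖ = ‖B‖ * ‖B‖ := by
    rw [← Matrix.l2_opNorm_conjTranspose_mul_self hM.sqrt, hK.1, hM.sqrt_mul_self,
      Matrix.l2_opNorm_conjTranspose_mul_self]
  have := mul_self_eq_mul_self_iff.mp h1
  rcases this with h | h
  · exact h
  · have h2 : ‖hM.sqrt‖ = 0 ∧ ‖B‖ = 0 := by
      constructor <;> nlinarith [norm_nonneg hM.sqrt, norm_nonneg B]
    rw [h2.1, h2.2]

lemma quad_le {K : Matrix n n ℂ} (hK : K.PosSemidef) (y : n → ℂ) :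
    (star y ⬝ᵥ (K *ᵥ y)).re ≤ ‖K‖ * env y ^ 2 := by
  have hR := hK.posSemidef_sqrt
  have hquad : (star y ⬝ᵥ (K *ᵥ y)).re = env (hK.sqrt *ᵥ y) ^ 2 := by
    rw [env_mulVec_sq, hR.1, hK.sqrt_mul_self]
  rw [hquad]
  have h1 : env (hK.sqrt *ᵥ y) ≤ ‖hK.sqrt‖ * env y := mulVec_env_le _ _
  have h2 : ‖hK.sqrt‖ * ‖hK.sqrt‖ = ‖K‖ := by
    rw [← Matrix.l2_opNorm_conjTranspose_mul_self hK.sqrt, hR.1, hK.sqrt_mul_self]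
  calc env (hK.sqrt *ᵥ y) ^ 2 ≤ (‖hK.sqrt‖ * env y) ^ 2 := by
        have := env_nonneg (hK.sqrt *ᵥ y)
        nlinarith
    _ = ‖K‖ * env y ^ 2 := by rw [mul_pow, pow_two, pow_two]; nlinarith [h2]
  
lemma entry_eq (M : Matrix n n ℂ) (i : n) :
    star (Pi.single i 1 : n → ℂ) ⬝ᵥ (M *ᵥ Pi.single i 1) = M i i := by
  simp [dotProduct, Matrix.mulVec, Pi.single_apply, Finset.sum_ite_eq, Finset.sum_ite_eq']

lemma traceNorm_le_right_proj {B P0 : Matrix n n ℂ} (hP : P0.IsHermitian) (hP2 : P0 * P0 = P0)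
    (hBP : B * P0 = B) : traceNorm B ≤ ‖B‖ * (P0.trace).re := by
  classical
  have hM := Matrix.posSemidef_conjTranspose_mul_self B
  set K := hM.sqrt with hKdef
  have hKpsd : K.PosSemidef := hM.posSemidef_sqrt
  have hMP : (Bᴴ * B) * P0 = Bᴴ * B := by rw [Matrix.mul_assoc, hBP]
  have hKP : K * P0 = K := by
    have h1P : (1 - P0)ᴴ = 1 - P0 := by
      rw [Matrix.conjTranspose_sub, Matrix.conjTranspose_one, hP]
    have hX : (K * (1 - P0))ᴴ * (K * (1 - P0)) = 0 := by
      calc (K * (1 - P0))ᴴ * (K * (1 - P0))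
          = (1 - P0) * ((K * K) * (1 - P0)) := by
            rw [Matrix.conjTranspose_mul, h1P, hKpsd.1]
            simp only [Matrix.mul_assoc]
        _ = 0 := by
            rw [hM.sqrt_mul_self,
              show (Bᴴ * B) * (1 - P0) = 0 by
                rw [Matrix.mul_sub, Matrix.mul_one, hMP, sub_self],
              Matrix.mul_zero]
    have h0 := Matrix.conjTranspose_mul_self_eq_zero.mp hX
    have hsub : K - K * P0 = 0 := by
      rw [Matrix.mul_sub, Matrix.mul_one] at h0
      exact h0
    exact (sub_eq_zero.mp hsub).symm
  have hPK : P0 * K = K := by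
    have := congrArg Matrix.conjTranspose hKP
    rwa [Matrix.conjTranspose_mul, hP, hKpsd.1] at this
  have hKsand : P0 * (K * P0) = K := by rw [hKP, hPK]
  have hnormK : ‖K‖ = ‖B‖ := norm_sqrt_ctms B
  have hterm : ∀ i, (K i i).re ≤ ‖B‖ * (P0 i i).re := by
    intro i
    set e : n → ℂ := Pi.single i 1 with he
    set y : n → ℂ := P0 *ᵥ e with hy
    have h1 : K i i = star y ⬝ᵥ (K *ᵥ y) := by
      conv_lhs => rw [← hKsand]
      rw [← entry_eq (P0 * (K * P0)) i, ← he]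
      rw [← Matrix.mulVec_mulVec, ← Matrix.mulVec_mulVec]
      rw [Matrix.dotProduct_mulVec (star e) P0, hy, Matrix.star_mulVec, hP]
    have h2 : env y ^ 2 = (P0 i i).re := by
      rw [env_sq]
      have : star y ⬝ᵥ y = star e ⬝ᵥ (P0 *ᵥ e) := by
        rw [hy, Matrix.star_mulVec, hP, ← Matrix.dotProduct_mulVec,
          Matrix.mulVec_mulVec, hP2]
      rw [this, entry_eq]
    calc (K i i).re = (star y ⬝ᵥ (K *ᵥ y)).re := by rw [h1]
      _ ≤ ‖K‖ * env y ^ 2 := quad_le hKpsd y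
      _ = ‖B‖ * (P0 i i).re := by rw [hnormK, h2]
  rw [traceNorm_eq]
  rw [show (Matrix.posSemidef_conjTranspose_mul_self B).sqrt = K from rfl]
  rw [Matrix.trace, Complex.re_sum, Matrix.trace, Complex.re_sum]
  calc ∑ i, ((K.diag i)).re ≤ ∑ i, ‖B‖ * (P0 i i).re :=
        Finset.sum_le_sum fun i _ => hterm i
    _ = ‖B‖ * ∑ i, (P0.diag i).re := by rw [Finset.mul_sum]; rfl

lemma sum_mulVec' {ι : Type*} (s : Finset ι) (M : ι → Matrix n n ℂ) (x : n → ℂ) :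
    (∑ i ∈ s, M i) *ᵥ x = ∑ i ∈ s, (M i *ᵥ x) := by
  ext j
  simp only [Matrix.mulVec, dotProduct, Finset.sum_apply, Finset.sum_mul,
    Matrix.sum_apply]
  rw [Finset.sum_comm]

lemma dotProduct_sum' {ι : Type*} (s : Finset ι) (v : n → ℂ) (f : ι → n → ℂ) :
    v ⬝ᵥ (∑ i ∈ s, f i) = ∑ i ∈ s, v ⬝ᵥ f i := by
  simp only [dotProduct, Finset.sum_apply, Finset.mul_sum]
  rw [Finset.sum_comm]

lemma psd_of_proj {Q : Matrix n n ℂ} (hherm : Q.IsHermitian) (hproj : Q * Q = Q) :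
    Q.PosSemidef := by
  have h : Q = Qᴴ * Q := by rw [hherm, hproj]
  exact h ▸ Matrix.posSemidef_conjTranspose_mul_self Q

lemma opNorm_sum_proj {ι : Type*} [Fintype ι] [DecidableEq ι] (P : ι → Matrix n n ℂ)
    (hherm : ∀ k, (P k).IsHermitian) (hproj : ∀ k, P k * P k = P k)
    (horth : ∀ i j, i ≠ j → P i * P j = 0) (hsum : ∑ k, P k = 1)
    (s : Finset ι) (w : ι → ℝ) {ε : ℝ} (hε : 0 ≤ ε)
    (hw0 : ∀ i, 0 ≤ w i) (hwε : ∀ i ∈ s, w i ≤ ε) :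
    ‖∑ i ∈ s, (w i : ℂ) • P i‖ ≤ ε := by
  set D := ∑ i ∈ s, (w i : ℂ) • P i with hD
  have hDH : Dᴴ = D := by
    rw [hD, Matrix.conjTranspose_sum]
    refine Finset.sum_congr rfl fun i _ => ?_
    rw [Matrix.conjTranspose_smul, hherm i, Complex.star_def, Complex.conj_ofReal]
  have hDD : Dᴴ * D = ∑ i ∈ s, ((w i * w i : ℝ) : ℂ) • P i := by
    rw [hDH, hD, Finset.sum_mul_sum]
    refine Finset.sum_congr rfl fun i hi => ?_
    rw [Finset.sum_eq_single_of_mem i hi]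
    · rw [smul_mul_smul_comm, hproj i, Complex.ofReal_mul]
    · intro j hj hne
      rw [smul_mul_smul_comm, horth i j (Ne.symm hne), smul_zero]
  have hpsd : ∀ k, (P k).PosSemidef := fun k => psd_of_proj (hherm k) (hproj k)
  refine opNorm_le D hε fun x => ?_
  have hq : ∀ k, 0 ≤ (star x ⬝ᵥ (P k *ᵥ x)).re := fun k => (hpsd k).re_dotProduct_nonneg x
  have hkey : env (D *ᵥ x) ^ 2 = ∑ i ∈ s, (w i * w i) * (star x ⬝ᵥ (P i *ᵥ x)).re := by
    rw [env_mulVec_sq, hDD, sum_mulVec', dotProduct_sum', Complex.re_sum]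
    refine Finset.sum_congr rfl fun i _ => ?_
    rw [Matrix.smul_mulVec, dotProduct_smul]
    simp [Complex.ofReal_mul]
  have hsumall : ∑ k, (star x ⬝ᵥ (P k *ᵥ x)).re = env x ^ 2 := by
    rw [env_sq]
    rw [← Complex.re_sum, ← dotProduct_sum', ← sum_mulVec', hsum, Matrix.one_mulVec]
  have hb1 : env (D *ᵥ x) ^ 2 ≤ ε ^ 2 * env x ^ 2 := by
    rw [hkey, ← hsumall]
    calc ∑ i ∈ s, (w i * w i) * (star x ⬝ᵥ (P i *ᵥ x)).re
        ≤ ∑ i ∈ s, ε ^ 2 * (star x ⬝ᵥ (P i *ᵥ x)).re := by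
          refine Finset.sum_le_sum fun i hi => ?_
          have h3 := hwε i hi
          have h4 := hw0 i
          have hww : w i * w i ≤ ε ^ 2 := by nlinarith
          exact mul_le_mul_of_nonneg_right hww (hq i)
      _ = ε ^ 2 * ∑ i ∈ s, (star x ⬝ᵥ (P i *ᵥ x)).re := by rw [Finset.mul_sum]
      _ ≤ ε ^ 2 * ∑ k, (star x ⬝ᵥ (P k *ᵥ x)).re := by
          refine mul_le_mul_of_nonneg_left ?_ (sq_nonneg ε)
          exact Finset.sum_le_sum_of_subset_of_nonneg (Finset.subset_univ s)
            (fun k _ _ => hq k)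
  have h1 := env_nonneg (D *ᵥ x)
  have h2 := env_nonneg x
  have hb2 : env (D *ᵥ x) ^ 2 ≤ (ε * env x) ^ 2 := by rw [mul_pow]; exact hb1
  exact (pow_le_pow_iff_left₀ h1 (mul_nonneg hε h2) two_ne_zero).mp hb2

end WOFTAux

/-- For a Hamiltonian with spectral gap `c` above the ground energy, the uniform mixture `ρ`
over the ground space and any observable `O` with `‖O‖ ≤ 1` satisfy
`‖[Ô(τ), ρ]‖₁ ≤ 2 e^{−c²/(4τ²)}`, where `Ô(τ)` is the Gaussian-weighted operator Fourier
transform of `O`. -/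
theorem woft_commutator_ground_state {n ι : Type*} [Fintype n] [DecidableEq n] [Fintype ι]
    (E : ι → ℝ) (P : ι → Matrix n n ℂ)
    (hherm : ∀ k, (P k).IsHermitian)
    (hproj : ∀ k, P k * P k = P k)
    (horth : ∀ i j, i ≠ j → P i * P j = 0)
    (hsum : ∑ k, P k = 1)
    (H : Matrix n n ℂ) (hH : H = ∑ k, (E k : ℂ) • P k)
    (k₀ : ι) (hP0 : (P k₀).trace ≠ 0)
    (c : ℝ) (hc : 0 < c)
    (hgap : ∀ k, k ≠ k₀ → E k₀ + c ≤ E k)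
    (ρ : Matrix n n ℂ) (hρ : ρ = ((P k₀).trace)⁻¹ • P k₀)
    (O : Matrix n n ℂ) (hO : ‖O‖ ≤ 1)
    (τ : ℝ) (hτ : 0 < τ)
    (Ohat : Matrix n n ℂ)
    (hOhat : Ohat = ∑ i, ∑ j,
      (Real.exp (-(E i - E j) ^ 2 / (4 * τ ^ 2)) : ℂ) • (P i * O * P j)) :
    traceNorm (Ohat * ρ - ρ * Ohat) ≤ 2 * Real.exp (-c ^ 2 / (4 * τ ^ 2)) := by
  classical
  set ε := Real.exp (-c ^ 2 / (4 * τ ^ 2)) with hεdef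
  have hεpos : 0 < ε := Real.exp_pos _
  have hpsd : ∀ k, (P k).PosSemidef := fun k => WOFTAux.psd_of_proj (hherm k) (hproj k)
  set t := (P k₀).trace with ht
  set r := t.re with hr
  have htr : t = (r : ℂ) := WOFTAux.trace_eq_re (hpsd k₀)
  have hrpos : 0 < r := by
    have h0 : (0:ℂ) ≤ t := WOFTAux.trace_nonneg' (hpsd k₀)
    rw [Complex.le_def] at h0
    rcases h0.1.lt_or_eq with h | h
    · simpa using h
    · exfalso
      refine hP0 ?_
      have hr0 : r = 0 := by simpa using h.symm
      rw [htr, hr0]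
      simp
  set Q : Matrix n n ℂ := 1 - P k₀ with hQ
  have hQherm : Qᴴ = Q := by
    rw [hQ, Matrix.conjTranspose_sub, Matrix.conjTranspose_one, hherm k₀]
  have hQP : Q * P k₀ = 0 := by
    rw [hQ, Matrix.sub_mul, Matrix.one_mul, hproj k₀, sub_self]
  have hPQ : P k₀ * Q = 0 := by
    rw [hQ, Matrix.mul_sub, Matrix.mul_one, hproj k₀, sub_self]
  have hQρ : Q * ρ = 0 := by rw [hρ, mul_smul_comm, hQP, smul_zero]
  have hρQ : ρ * Q = 0 := by rw [hρ, smul_mul_assoc, hPQ, smul_zero]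
  have hρP : ρ * P k₀ = ρ := by rw [hρ, smul_mul_assoc, hproj k₀]
  have hρherm : ρᴴ = ρ := by
    rw [hρ, Matrix.conjTranspose_smul, hherm k₀, htr]
    congr 1
    simp [Complex.star_def, map_inv₀, Complex.conj_ofReal]
  -- collapse lemma
  have hcollapse : ∀ (a : ι → ι → ℝ) (X : Matrix n n ℂ),
      Q * (∑ i, ∑ j, ((a i j : ℝ) : ℂ) • (P i * X * P j)) * P k₀
        = (∑ i ∈ Finset.univ.erase k₀, ((a i k₀ : ℝ) : ℂ) • P i) * (X * P k₀) := by
    intro a X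
    have h1 : (∑ i, ∑ j, ((a i j : ℝ) : ℂ) • (P i * X * P j)) * P k₀
        = ∑ i, ((a i k₀ : ℝ) : ℂ) • (P i * X * P k₀) := by
      rw [Finset.sum_mul]
      refine Finset.sum_congr rfl fun i _ => ?_
      rw [Finset.sum_mul, Finset.sum_eq_single k₀]
      · rw [smul_mul_assoc, Matrix.mul_assoc, hproj k₀]
      · intro j _ hne
        rw [smul_mul_assoc, Matrix.mul_assoc, horth j k₀ hne, Matrix.mul_zero, smul_zero]
      · intro h; exact absurd (Finset.mem_univ k₀) h
    rw [Matrix.mul_assoc, h1, Finset.mul_sum]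
    have h2 : ∀ i, Q * (((a i k₀ : ℝ) : ℂ) • (P i * X * P k₀))
        = ((a i k₀ : ℝ) : ℂ) • (Q * P i * (X * P k₀)) := by
      intro i
      rw [mul_smul_comm]
      congr 1
      rw [← Matrix.mul_assoc]
      simp only [Matrix.mul_assoc]
    simp only [h2]
    rw [Finset.sum_mul]
    rw [← Finset.sum_erase (Finset.univ) (a := k₀)
      (f := fun i => ((a i k₀ : ℝ) : ℂ) • (Q * P i * (X * P k₀)))
      (show ((a k₀ k₀ : ℝ) : ℂ) • (Q * P k₀ * (X * P k₀)) = 0 by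
        rw [hQP, Matrix.zero_mul, smul_zero])]
    refine Finset.sum_congr rfl fun i hi => ?_
    rw [smul_mul_assoc]
    congr 2
    rw [hQ, Matrix.sub_mul, Matrix.one_mul, horth k₀ i (Finset.ne_of_mem_erase hi).symm,
      sub_zero]
  -- Ohat decompositions
  set w : ι → ι → ℝ := fun i j => Real.exp (-(E i - E j) ^ 2 / (4 * τ ^ 2)) with hw
  set D1 : Matrix n n ℂ := ∑ i ∈ Finset.univ.erase k₀, ((w i k₀ : ℝ) : ℂ) • P i with hD1
  set D2 : Matrix n n ℂ := ∑ i ∈ Finset.univ.erase k₀, ((w k₀ i : ℝ) : ℂ) • P i with hD2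
  have hQOP : Q * Ohat * P k₀ = D1 * (O * P k₀) := by
    rw [hOhat]; exact hcollapse w O
  have hOhatH : Ohatᴴ = ∑ i, ∑ j, ((w j i : ℝ) : ℂ) • (P i * Oᴴ * P j) := by
    rw [hOhat]
    have e1 : (∑ i, ∑ j, ((w i j : ℝ) : ℂ) • (P i * O * P j))ᴴ
        = ∑ i, ∑ j, ((w i j : ℝ) : ℂ) • (P j * Oᴴ * P i) := by
      rw [Matrix.conjTranspose_sum]
      refine Finset.sum_congr rfl fun i _ => ?_
      rw [Matrix.conjTranspose_sum]
      refine Finset.sum_congr rfl fun j _ => ?_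
      rw [Matrix.conjTranspose_smul, Matrix.conjTranspose_mul, Matrix.conjTranspose_mul,
        hherm j, hherm i]
      congr 1
      · simp [Complex.star_def, Complex.conj_ofReal]
      · rw [Matrix.mul_assoc]
    rw [e1, Finset.sum_comm]
  have hQOHP : Q * Ohatᴴ * P k₀ = D2 * (Oᴴ * P k₀) := by
    rw [hOhatH]; exact hcollapse (fun i j => w j i) Oᴴ
  -- norm bounds on D1 D2
  have hwnonneg : ∀ i j, 0 ≤ w i j := fun i j => (Real.exp_pos _).le
  have hgapbound : ∀ i ∈ Finset.univ.erase k₀, w i k₀ ≤ ε := by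
    intro i hi
    have hne : i ≠ k₀ := Finset.ne_of_mem_erase hi
    have h1 : c ≤ E i - E k₀ := by have := hgap i hne; linarith
    have h2 : c ^ 2 ≤ (E i - E k₀) ^ 2 := by nlinarith
    have h3 : 0 < 4 * τ ^ 2 := by positivity
    refine Real.exp_le_exp.mpr ?_
    rw [div_le_div_iff₀ h3 h3]
    nlinarith
  have hgapbound2 : ∀ i ∈ Finset.univ.erase k₀, w k₀ i ≤ ε := by
    intro i hi
    have hne : i ≠ k₀ := Finset.ne_of_mem_erase hi
    have h1 : c ≤ E i - E k₀ := by have := hgap i hne; linarith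
    have h2 : c ^ 2 ≤ (E k₀ - E i) ^ 2 := by nlinarith
    have h3 : 0 < 4 * τ ^ 2 := by positivity
    refine Real.exp_le_exp.mpr ?_
    rw [div_le_div_iff₀ h3 h3]
    nlinarith
  have hD1norm : ‖D1‖ ≤ ε := WOFTAux.opNorm_sum_proj P hherm hproj horth hsum _ _ hεpos.le
    (fun i => hwnonneg i k₀) hgapbound
  have hD2norm : ‖D2‖ ≤ ε := WOFTAux.opNorm_sum_proj P hherm hproj horth hsum _ _ hεpos.le
    (fun i => hwnonneg k₀ i) hgapbound2
  have hPnorm : ‖P k₀‖ ≤ 1 := by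
    have := WOFTAux.opNorm_sum_proj P hherm hproj horth hsum {k₀} (fun _ => 1) zero_le_one
      (fun _ => zero_le_one) (fun _ _ => le_refl 1)
    simpa using this
  have hOH : ‖Oᴴ‖ ≤ 1 := by rw [Matrix.l2_opNorm_conjTranspose]; exact hO
  have hQOPnorm : ‖Q * Ohat * P k₀‖ ≤ ε := by
    rw [hQOP]
    calc ‖D1 * (O * P k₀)‖ ≤ ‖D1‖ * ‖O * P k₀‖ := norm_mul_le _ _
      _ ≤ ε * 1 := by
          refine mul_le_mul hD1norm ?_ (norm_nonneg _) hεpos.le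
          calc ‖O * P k₀‖ ≤ ‖O‖ * ‖P k₀‖ := norm_mul_le _ _
            _ ≤ 1 * 1 := mul_le_mul hO hPnorm (norm_nonneg _) zero_le_one
            _ = 1 := one_mul 1
      _ = ε := mul_one ε
  have hQOHPnorm : ‖Q * Ohatᴴ * P k₀‖ ≤ ε := by
    rw [hQOHP]
    calc ‖D2 * (Oᴴ * P k₀)‖ ≤ ‖D2‖ * ‖Oᴴ * P k₀‖ := norm_mul_le _ _
      _ ≤ ε * 1 := by
          refine mul_le_mul hD2norm ?_ (norm_nonneg _) hεpos.le
          calc ‖Oᴴ * P k₀‖ ≤ ‖Oᴴ‖ * ‖P k₀‖ := norm_mul_le _ _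
            _ ≤ 1 * 1 := mul_le_mul hOH hPnorm (norm_nonneg _) zero_le_one
            _ = 1 := one_mul 1
      _ = ε := mul_one ε
  -- B and C
  set B : Matrix n n ℂ := Q * Ohat * ρ with hBdef
  set C : Matrix n n ℂ := ρ * Ohat * Q with hCdef
  have hmid : P k₀ * Ohat * ρ = ρ * Ohat * P k₀ := by
    rw [hρ, mul_smul_comm, smul_mul_assoc, smul_mul_assoc]
  have hBC : B - C = Ohat * ρ - ρ * Ohat := by
    have hB' : B = Ohat * ρ - P k₀ * Ohat * ρ := by
      rw [hBdef, hQ, Matrix.sub_mul, Matrix.sub_mul, Matrix.one_mul]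
    have hC' : C = ρ * Ohat - ρ * Ohat * P k₀ := by
      rw [hCdef, hQ, Matrix.mul_sub, Matrix.mul_one]
    rw [hB', hC', hmid]
    abel
  have h1 : Bᴴ * C = 0 := by
    calc Bᴴ * C = ρᴴ * (Ohatᴴ * ((Qᴴ * ρ) * (Ohat * Q))) := by
          rw [hBdef, hCdef]
          simp only [Matrix.conjTranspose_mul, Matrix.mul_assoc]
      _ = 0 := by rw [hQherm, hQρ, Matrix.zero_mul, Matrix.mul_zero, Matrix.mul_zero]
  have h2 : Cᴴ * B = 0 := by
    calc Cᴴ * B = Qᴴ * (Ohatᴴ * ((ρᴴ * Q) * (Ohat * ρ))) := by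
          rw [hBdef, hCdef]
          simp only [Matrix.conjTranspose_mul, Matrix.mul_assoc]
      _ = 0 := by rw [hρherm, hρQ, Matrix.zero_mul, Matrix.mul_zero, Matrix.mul_zero]
  have hBCH : B * Cᴴ = 0 := by
    calc B * Cᴴ = Q * (Ohat * ((ρ * Qᴴ) * (Ohatᴴ * ρᴴ))) := by
          rw [hBdef, hCdef]
          simp only [Matrix.conjTranspose_mul, Matrix.mul_assoc]
      _ = 0 := by rw [hQherm, hρQ, Matrix.zero_mul, Matrix.mul_zero, Matrix.mul_zero]
  have h3 : (Bᴴ * B) * (Cᴴ * C) = 0 := by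
    rw [Matrix.mul_assoc Bᴴ B _, ← Matrix.mul_assoc B Cᴴ C, hBCH, Matrix.zero_mul,
      Matrix.mul_zero]
  -- trace-norm bounds
  have hBP : B * P k₀ = B := by rw [hBdef, Matrix.mul_assoc, hρP]
  have hBsmul : B = (t⁻¹ : ℂ) • (Q * Ohat * P k₀) := by
    rw [hBdef, hρ, mul_smul_comm]
  have hnormB : ‖B‖ ≤ r⁻¹ * ε := by
    rw [hBsmul, norm_smul]
    have h4 : ‖(t⁻¹ : ℂ)‖ = r⁻¹ := by
      rw [htr, ← Complex.ofReal_inv, Complex.norm_real, Real.norm_eq_abs,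
        abs_of_nonneg (by positivity)]
    rw [h4]
    exact mul_le_mul_of_nonneg_left hQOPnorm (by positivity)
  have htnB : traceNorm B ≤ ε := by
    have := WOFTAux.traceNorm_le_right_proj (hherm k₀) (hproj k₀) hBP
    calc traceNorm B ≤ ‖B‖ * (P k₀).trace.re := this
      _ ≤ (r⁻¹ * ε) * r := by
          refine mul_le_mul_of_nonneg_right hnormB ?_
          exact hrpos.le
      _ = ε := by field_simp
  have hCH : Cᴴ = Q * Ohatᴴ * ρ := by
    rw [hCdef, Matrix.conjTranspose_mul, Matrix.conjTranspose_mul, hQherm, hρherm,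
      Matrix.mul_assoc]
  have hCHP : Cᴴ * P k₀ = Cᴴ := by rw [hCH, Matrix.mul_assoc, hρP]
  have hCHsmul : Cᴴ = (t⁻¹ : ℂ) • (Q * Ohatᴴ * P k₀) := by
    rw [hCH, hρ, mul_smul_comm]
  have hnormCH : ‖Cᴴ‖ ≤ r⁻¹ * ε := by
    rw [hCHsmul, norm_smul]
    have h4 : ‖(t⁻¹ : ℂ)‖ = r⁻¹ := by
      rw [htr, ← Complex.ofReal_inv, Complex.norm_real, Real.norm_eq_abs,
        abs_of_nonneg (by positivity)]
    rw [h4]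
    exact mul_le_mul_of_nonneg_left hQOHPnorm (by positivity)
  have htnC : traceNorm C ≤ ε := by
    rw [← WOFTAux.traceNorm_conjTranspose C]
    have := WOFTAux.traceNorm_le_right_proj (hherm k₀) (hproj k₀) hCHP
    calc traceNorm Cᴴ ≤ ‖Cᴴ‖ * (P k₀).trace.re := this
      _ ≤ (r⁻¹ * ε) * r := mul_le_mul_of_nonneg_right hnormCH hrpos.le
      _ = ε := by field_simp
  rw [← hBC, WOFTAux.traceNorm_sub_orth h1 h2 h3]
  linarith
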